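/- There is a canonical isomorphism of k[√t]-algebras 𝐀 ⊗_{k[t]} k[√t] ≅ A[√t] ⊕ ⊕_{n≥1} I^n·(√t)^{-n}, i.e., the base change of the contraction algebra along k[t] → k[√t] (t ↦ (√t)²) is the extended Rees algebra of (A, I), where I is the ideal generated by A^{-θ}. -/

import Mathlib

open LaurentPolynomial

/-- The contraction algebra `𝐀`: the `k[t]`-subalgebra of `A[√t^{±1}]`
(with `t = (√t)²`) generated by `A^θ` and `(1/√t)·A^{-θ}`. -/
noncomputable def contraction (k A : Type*) [CommRing k] [CommRing A] [Algebra k A]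
    (θ : A →ₐ[k] A) : Subalgebra k (LaurentPolynomial A) :=
  Algebra.adjoin k (insert (T 2)
    ({f | ∃ a, θ a = a ∧ f = C a} ∪ {f | ∃ a, θ a = -a ∧ f = C a * T (-1)}))

set_option linter.unusedSectionVars false

section Aux

variable {A : Type*} [CommRing A]

/-- sign twist -/
def sgn (n : ℤ) (x : A) : A := if Even n then x else -x

lemma sgn_zero (n : ℤ) : sgn (A := A) n 0 = 0 := by unfold sgn; split <;> simp

lemma sgn_add (n : ℤ) (x y : A) : sgn n (x + y) = sgn n x + sgn n y := by
  unfold sgn; split <;> ring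

lemma sgn_sub (n : ℤ) (x y : A) : sgn n (x - y) = sgn n x - sgn n y := by
  unfold sgn; split <;> ring

lemma sgn_neg (n : ℤ) (x : A) : sgn n (-x) = - sgn n x := by
  unfold sgn; split <;> ring

lemma sgn_smul {k : Type*} [CommRing k] [Algebra k A] (n : ℤ) (c : k) (x : A) :
    sgn n (c • x) = c • sgn n x := by
  unfold sgn; split <;> simp

lemma sgn_sgn (n : ℤ) (x : A) : sgn n (sgn n x) = x := by
  unfold sgn; split <;> simp

lemma mul_sgn (n : ℤ) (x y : A) : x * sgn n y = sgn n (x * y) := by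
  unfold sgn; split <;> ring

lemma sgn_mul (m n : ℤ) (x y : A) : sgn m x * sgn n y = sgn (m + n) (x * y) := by
  unfold sgn
  by_cases hm : Even m <;> by_cases hn : Even n
  · rw [if_pos hm, if_pos hn, if_pos (Int.even_add.2 (by tauto))]
  · rw [if_pos hm, if_neg hn, if_neg (by rw [Int.even_add]; tauto)]; ring
  · rw [if_neg hm, if_pos hn, if_neg (by rw [Int.even_add]; tauto)]; ring
  · rw [if_neg hm, if_neg hn, if_pos (Int.even_add.2 (by tauto))]; ring

lemma sgn_succ (n : ℤ) (x : A) : sgn (n + 1) x = - sgn n x := by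
  unfold sgn
  by_cases h : Even n <;> simp [Int.even_add_one, h]

lemma sgn_congr {m n : ℤ} (h : Even m ↔ Even n) (x : A) : sgn m x = sgn n x := by
  unfold sgn
  by_cases hm : Even m
  · rw [if_pos hm, if_pos (h.1 hm)]
  · rw [if_neg hm, if_neg (fun hn => hm (h.2 hn))]

lemma theta_sgn {k : Type*} [CommRing k] [Algebra k A] {θ : A →ₐ[k] A} (n : ℤ) (x : A) :
    θ (sgn n x) = sgn n (θ x) := by
  unfold sgn; split <;> simp

lemma sgn_eq_zero {n : ℤ} {x : A} (h : sgn n x = 0) : x = 0 := by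
  unfold sgn at h; split at h
  · exact h
  · exact neg_eq_zero.mp h

lemma half_cancel (k : Type*) [CommRing k] [Algebra k A] [Invertible (2 : k)]
    {x : A} (h : x + x = 0) : x = 0 := by
  have h2 : (2 : k) • x = 0 := by rw [two_smul]; exact h
  calc x = (⅟(2:k) * 2) • x := by simp
  _ = ⅟(2:k) • ((2:k) • x) := by rw [smul_smul]
  _ = 0 := by rw [h2, smul_zero]

lemma eigen_cancel (k : Type*) [CommRing k] [Algebra k A] [Invertible (2 : k)]
    {θ : A →ₐ[k] A} {n : ℤ} {x : A}
    (h1 : θ x = sgn n x) (h2 : θ x = - sgn n x) : x = 0 := by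
  have hs : sgn n x = - sgn n x := h1.symm.trans h2
  have : sgn n x + sgn n x = 0 := by linear_combination hs
  exact sgn_eq_zero (half_cancel k this)

end Aux

lemma sgn_of_even {A : Type*} [CommRing A] {n : ℤ} (h : Even n) (x : A) : sgn n x = x :=
  if_pos h

lemma sgn_of_odd {A : Type*} [CommRing A] {n : ℤ} (h : ¬ Even n) (x : A) : sgn n x = -x :=
  if_neg h

section QSec

variable {k A : Type*} [CommRing k] [CommRing A] [Algebra k A] [Invertible (2 : k)]
variable (θ : A →ₐ[k] A)

lemma gen_T2 : T 2 ∈ contraction k A θ :=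
  Algebra.subset_adjoin (Set.mem_insert _ _)

lemma gen_C {a : A} (h : θ a = a) : C a ∈ contraction k A θ := by
  apply Algebra.subset_adjoin
  rw [Set.mem_insert_iff]
  exact Or.inr (Set.mem_union_left _ ⟨a, h, rfl⟩)

lemma gen_CT {a : A} (h : θ a = -a) : C a * T (-1) ∈ contraction k A θ := by
  apply Algebra.subset_adjoin
  rw [Set.mem_insert_iff]
  exact Or.inr (Set.mem_union_right _ ⟨a, h, rfl⟩)

/-- the "pure weight `r`" part of the ideal filtration -/
def Qset (r : ℕ) : Set A :=
  {x | θ x = sgn r x ∧ x ∈ (Ideal.span {y : A | θ y = -y}) ^ r ∧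
    C x * T (-(r : ℤ)) ∈ contraction k A θ}

variable (hθ : ∀ x, θ (θ x) = x)

lemma zero_mem_Qset (r : ℕ) : (0 : A) ∈ Qset θ r :=
  ⟨by rw [map_zero, sgn_zero], zero_mem _, by rw [map_zero, zero_mul]; exact zero_mem _⟩

lemma add_mem_Qset {r : ℕ} {x y : A} (hx : x ∈ Qset θ r) (hy : y ∈ Qset θ r) :
    x + y ∈ Qset θ r := by
  refine ⟨by rw [map_add, hx.1, hy.1, sgn_add], add_mem hx.2.1 hy.2.1, ?_⟩
  rw [map_add, add_mul]
  exact add_mem hx.2.2 hy.2.2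

lemma smul_mem_Qset {r : ℕ} (c : k) {x : A} (hx : x ∈ Qset θ r) : c • x ∈ Qset θ r := by
  refine ⟨by rw [map_smul, hx.1, sgn_smul], ?_, ?_⟩
  · rw [Algebra.smul_def]
    exact Ideal.mul_mem_left _ _ hx.2.1
  have : C (c • x) = c • C x := by
    rw [Algebra.smul_def, Algebra.smul_def, map_mul, LaurentPolynomial.algebraMap_apply]
  rw [this, smul_mul_assoc]
  exact (contraction k A θ).smul_mem hx.2.2 c

lemma mulQ_sym {r : ℕ} {c x : A} (hc : θ c = c) (hx : x ∈ Qset θ r) : c * x ∈ Qset θ r := by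
  refine ⟨by rw [map_mul, hc, hx.1, mul_sgn], Ideal.mul_mem_left _ _ hx.2.1, ?_⟩
  have : C (c * x) * T (-(r:ℤ)) = C c * (C x * T (-(r:ℤ))) := by rw [map_mul]; ring
  rw [this]
  exact mul_mem (gen_C θ hc) hx.2.2

lemma mulQ_anti {r : ℕ} {c x : A} (hc : θ c = -c) (hx : x ∈ Qset θ r) :
    c * x ∈ Qset θ (r + 1) := by
  refine ⟨?_, ?_, ?_⟩
  · rw [map_mul, hc, hx.1]
    have : ((r:ℤ) + 1) = (((r+1):ℕ) : ℤ) := by push_cast; ring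
    rw [← this, sgn_succ]
    rw [← mul_sgn]
    ring
  · rw [pow_succ']
    exact Ideal.mul_mem_mul (Ideal.subset_span hc) hx.2.1
  · have : C (c * x) * T (-((r:ℕ)+1 : ℕ) : ℤ) = (C c * T (-1)) * (C x * T (-(r:ℤ))) := by
      rw [map_mul, show (-(((r:ℕ)+1 : ℕ)) : ℤ) = -1 + -(r:ℤ) by push_cast; ring, T_add]; ring
    rw [this]
    exact mul_mem (gen_CT θ hc) hx.2.2

lemma mulQ_anti' {r : ℕ} {c x : A} (hc : θ c = -c) (hx : x ∈ Qset θ (r + 1)) :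
    c * x ∈ Qset θ r := by
  refine ⟨?_, ?_, ?_⟩
  · rw [map_mul, hc, hx.1,
      show (((r+1):ℕ) : ℤ) = (r:ℤ) + 1 by push_cast; ring, sgn_succ, ← mul_sgn]
    ring
  · have h2 : c * x ∈ (Ideal.span {y : A | θ y = -y}) ^ (r + 2) := by
      rw [pow_succ']
      exact Ideal.mul_mem_mul (Ideal.subset_span hc) hx.2.1
    exact Ideal.pow_le_pow_right (by omega) h2
  · have e1 : (T (-1) : LaurentPolynomial A) * T (-(((r+1):ℕ)) : ℤ) * T 2 = T (-(r:ℤ)) := by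
      rw [← T_add, ← T_add]
      congr 1
      push_cast; ring
    have : C (c * x) * T (-(r:ℤ)) =
        (C c * T (-1)) * (C x * T (-(((r+1):ℕ) : ℤ))) * T 2 := by
      rw [map_mul, ← e1]; ring
    rw [this]
    exact mul_mem (mul_mem (gen_CT θ hc) hx.2.2) (gen_T2 θ)

end QSec

section RSec

variable {k A : Type*} [CommRing k] [CommRing A] [Algebra k A] [Invertible (2 : k)]
variable (θ : A →ₐ[k] A)

/-- symmetric part -/
noncomputable def symPart (c : A) : A := ⅟(2:k) • (c + θ c)

/-- antisymmetric part -/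
noncomputable def antiPart (c : A) : A := ⅟(2:k) • (c - θ c)

lemma symPart_add_antiPart (c : A) : symPart θ c + antiPart θ c = c := by
  unfold symPart antiPart
  rw [← smul_add, show (c + θ c) + (c - θ c) = c + c by ring, ← two_smul k, smul_smul,
    invOf_mul_self, one_smul]

lemma theta_symPart (hθ : ∀ x, θ (θ x) = x) (c : A) : θ (symPart θ c) = symPart θ c := by
  unfold symPart
  rw [map_smul, map_add, hθ, add_comm]

lemma theta_antiPart (hθ : ∀ x, θ (θ x) = x) (c : A) : θ (antiPart θ c) = - antiPart θ c := by
  unfold antiPart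
  rw [map_smul, map_sub, hθ, ← smul_neg, show θ c - c = -(c - θ c) by ring]

/-- `Qset r + Qset (r+1)`, as an ideal. -/
noncomputable def Rr (hθ : ∀ x, θ (θ x) = x) (r : ℕ) : Ideal A where
  carrier := {x | ∃ y z, y ∈ Qset θ r ∧ z ∈ Qset θ (r + 1) ∧ x = y + z}
  zero_mem' := ⟨0, 0, zero_mem_Qset θ r, zero_mem_Qset θ (r+1), (add_zero 0).symm⟩
  add_mem' := by
    rintro a b ⟨y, z, hy, hz, rfl⟩ ⟨y', z', hy', hz', rfl⟩
    exact ⟨y + y', z + z', add_mem_Qset θ hy hy', add_mem_Qset θ hz hz', by ring⟩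
  smul_mem' := by
    rintro c x ⟨y, z, hy, hz, rfl⟩
    refine ⟨symPart θ c * y + antiPart θ c * z, antiPart θ c * y + symPart θ c * z,
      add_mem_Qset θ (mulQ_sym θ (theta_symPart θ hθ c) hy)
        (mulQ_anti' θ (theta_antiPart θ hθ c) hz),
      add_mem_Qset θ (mulQ_anti θ (theta_antiPart θ hθ c) hy)
        (mulQ_sym θ (theta_symPart θ hθ c) hz), ?_⟩
    have hc := symPart_add_antiPart θ c
    rw [smul_eq_mul]
    linear_combination (y + z) * hc.symm

lemma I_pow_le_Rr (hθ : ∀ x, θ (θ x) = x) (r : ℕ) : (Ideal.span {y : A | θ y = -y}) ^ r ≤ Rr θ hθ r := by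
  induction r with
  | zero =>
    intro x _
    have hs : symPart θ x ∈ Qset θ 0 := by
      refine ⟨?_, ?_, ?_⟩
      · rw [theta_symPart θ hθ x]
        unfold sgn
        rw [if_pos (by simp)]
      · rw [pow_zero, Ideal.one_eq_top]; trivial
      · simp only [Nat.cast_zero, neg_zero, T_zero, mul_one]
        exact gen_C θ (theta_symPart θ hθ x)
    have ha : antiPart θ x ∈ Qset θ (0+1) := by
      refine ⟨?_, ?_, ?_⟩
      · rw [theta_antiPart θ hθ x]
        unfold sgn
        rw [if_neg (by simp)]
      · rw [pow_one]
        exact Ideal.subset_span (theta_antiPart θ hθ x)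
      · have : (-((0+1:ℕ):ℤ)) = -1 := by norm_num
        simp only [this]
        exact gen_CT θ (theta_antiPart θ hθ x)
    exact ⟨_, _, hs, ha, (symPart_add_antiPart θ x).symm⟩
  | succ r ih =>
    rw [pow_succ]
    refine Ideal.mul_le.mpr fun a ha b hb => ?_
    refine Submodule.span_induction (p := fun b _ => a * b ∈ Rr θ hθ (r+1)) ?_ ?_ ?_ ?_ hb
    · intro b hbmem
      obtain ⟨y, z, hy, hz, rfl⟩ := ih ha
      exact ⟨b * y, b * z, mulQ_anti θ hbmem hy, mulQ_anti θ hbmem hz, by ring⟩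
    · show a * 0 ∈ Rr θ hθ (r+1)
      rw [mul_zero]; exact zero_mem _
    · intro u v _ _ hu hv
      show a * (u + v) ∈ Rr θ hθ (r+1)
      rw [mul_add]; exact add_mem hu hv
    · intro c u _ hu
      show a * (c • u) ∈ Rr θ hθ (r+1)
      rw [mul_smul_comm]
      exact Submodule.smul_mem _ _ hu

lemma mem_Qset_of (hθ : ∀ x, θ (θ x) = x) {r : ℕ} {x : A}
    (hx : x ∈ (Ideal.span {y : A | θ y = -y}) ^ r) (h : θ x = sgn r x) : x ∈ Qset θ r := by
  obtain ⟨y, z, hy, hz, rfl⟩ := I_pow_le_Rr θ hθ r hx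
  have hz1 : θ z = - sgn (r:ℤ) z := by
    rw [hz.1, show (((r+1:ℕ)):ℤ) = (r:ℤ) + 1 by push_cast; ring, sgn_succ]
  have hz2 : θ z = sgn (r:ℤ) z := by
    have := h
    rw [map_add, hy.1, sgn_add] at this
    linear_combination this
  have : z = 0 := eigen_cancel k hz2 hz1
  rw [this, add_zero]
  exact hy

lemma mem_Qset_succ_of (hθ : ∀ x, θ (θ x) = x) {r : ℕ} {x : A}
    (hx : x ∈ (Ideal.span {y : A | θ y = -y}) ^ r) (h : θ x = - sgn r x) :
    x ∈ Qset θ (r + 1) := by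
  obtain ⟨y, z, hy, hz, rfl⟩ := I_pow_le_Rr θ hθ r hx
  have hy1 : θ y = sgn (r:ℤ) y := hy.1
  have hy2 : θ y = - sgn (r:ℤ) y := by
    have h' := h
    rw [map_add, hz.1, show (((r+1:ℕ)):ℤ) = (r:ℤ) + 1 by push_cast; ring, sgn_succ,
      sgn_add] at h'
    linear_combination h'
  have : y = 0 := eigen_cancel k hy1 hy2
  rw [this, zero_add]
  exact hz

lemma theta_mem_pow (hθ : ∀ x, θ (θ x) = x) {r : ℕ} {x : A}
    (hx : x ∈ (Ideal.span {y : A | θ y = -y}) ^ r) :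
    θ x ∈ (Ideal.span {y : A | θ y = -y}) ^ r := by
  have h1 : Ideal.map θ ((Ideal.span {y : A | θ y = -y}) ^ r) ≤
      (Ideal.span {y : A | θ y = -y}) ^ r := by
    rw [Ideal.map_pow]
    refine Ideal.pow_right_mono ?_ r
    rw [Ideal.map_span]
    refine Ideal.span_le.mpr ?_
    rintro _ ⟨a, ha, rfl⟩
    refine Ideal.subset_span ?_
    show θ (θ a) = -(θ a)
    rw [hθ, ha, neg_neg]
  exact h1 (Ideal.mem_map_of_mem θ hx)

end RSec

section CSec

variable {k A : Type*} [CommRing k] [CommRing A] [Algebra k A] [Invertible (2 : k)]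
variable (θ : A →ₐ[k] A)

/-- allowed coefficients in degree `n` -/
def Msub (n : ℤ) : AddSubmonoid A where
  carrier := {x | θ x = sgn n x ∧ x ∈ (Ideal.span {y : A | θ y = -y}) ^ (-n).toNat}
  zero_mem' := ⟨by rw [map_zero, sgn_zero], zero_mem _⟩
  add_mem' := fun hx hy => ⟨by rw [map_add, hx.1, hy.1, sgn_add], add_mem hx.2 hy.2⟩

lemma Msub_mul {m n : ℤ} {x y : A} (hx : x ∈ Msub θ m) (hy : y ∈ Msub θ n) :
    x * y ∈ Msub θ (m + n) := by
  refine ⟨by rw [map_mul, hx.1, hy.1, sgn_mul], ?_⟩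
  have h1 := Ideal.mul_mem_mul hx.2 hy.2
  rw [← pow_add] at h1
  exact Ideal.pow_le_pow_right (by omega) h1

lemma coeff_mem {f : LaurentPolynomial A} (hf : f ∈ contraction k A θ) :
    ∀ n : ℤ, f.coeff n ∈ Msub θ n := by
  refine Algebra.adjoin_induction (hx := hf) ?_ ?_ ?_ ?_
  · intro x hx
    rw [Set.mem_insert_iff, Set.mem_union] at hx
    rcases hx with rfl | ⟨a, ha, rfl⟩ | ⟨a, ha, rfl⟩
    · intro n
      rw [T_apply]
      split_ifs with h
      · subst h
        refine ⟨by rw [map_one, sgn_of_even (by decide)], ?_⟩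
        rw [show ((-2:ℤ)).toNat = 0 from rfl, pow_zero, Ideal.one_eq_top]
        trivial
      · exact zero_mem _
    · intro n
      rw [C_apply]
      split_ifs with h
      · subst h
        refine ⟨by rw [ha, sgn_of_even (by decide)], ?_⟩
        rw [show ((-0:ℤ)).toNat = 0 from rfl, pow_zero, Ideal.one_eq_top]
        trivial
      · exact zero_mem _
    · intro n
      rw [← single_eq_C_mul_T, AddMonoidAlgebra.coeff_single, Finsupp.single_apply]
      split_ifs with h
      · subst h
        refine ⟨by rw [ha, sgn_of_odd (by decide)], ?_⟩
        rw [show ((-(-1):ℤ)).toNat = 1 from rfl, pow_one]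
        exact Ideal.subset_span ha
      · exact zero_mem _
  · intro r n
    rw [LaurentPolynomial.algebraMap_apply, C_apply]
    split_ifs with h
    · subst h
      refine ⟨by rw [AlgHom.commutes, sgn_of_even (by decide)], ?_⟩
      rw [show ((-0:ℤ)).toNat = 0 from rfl, pow_zero, Ideal.one_eq_top]
      trivial
    · exact zero_mem _
  · intro f g _ _ hf hg n
    exact add_mem (hf n) (hg n)
  · intro f g _ _ hf hg n
    classical
    rw [AddMonoidAlgebra.coeff_mul]
    rw [Finsupp.sum]
    refine AddSubmonoid.sum_mem _ fun i _ => ?_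
    rw [Finsupp.sum]
    refine AddSubmonoid.sum_mem _ fun j _ => ?_
    split_ifs with h
    · rw [← h]
      exact Msub_mul θ (hf i) (hg j)
    · exact zero_mem _

lemma monomial_mem (hθ : ∀ x, θ (θ x) = x) {n : ℤ} {x : A} (h1 : θ x = sgn n x)
    (h2 : n < 0 → x ∈ (Ideal.span {y : A | θ y = -y}) ^ (-n).toNat) :
    C x * T n ∈ contraction k A θ := by
  rcases lt_or_ge n 0 with hn | hn
  · set r := (-n).toNat with hrdef
    have hr : (r : ℤ) = -n := Int.toNat_of_nonneg (by omega)
    have h1' : θ x = sgn (r:ℤ) x := by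
      rw [h1]
      refine sgn_congr ?_ x
      rw [hr]; exact even_neg.symm
    have hq := mem_Qset_of θ hθ (h2 hn) h1'
    have h3 := hq.2.2
    rw [hr, neg_neg] at h3
    exact h3
  · by_cases he : Even n
    · obtain ⟨j, hj⟩ := he
      have hj0 : 0 ≤ j := by omega
      have hm : ((j.toNat : ℕ) : ℤ) = j := Int.toNat_of_nonneg hj0
      have : C x * T n = C x * (T 2) ^ (j.toNat) := by
        rw [T_pow]
        congr 1
        congr 1
        omega
      rw [this]
      exact mul_mem (gen_C θ (by rw [h1, sgn_of_even ⟨j, hj⟩])) (pow_mem (gen_T2 θ) _)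
    · have hx : θ x = -x := by rw [h1, sgn_of_odd he]
      obtain ⟨j, hj⟩ := Int.not_even_iff_odd.mp he
      have hj0 : 0 ≤ j := by omega
      have hm : ((j.toNat : ℕ) : ℤ) = j := Int.toNat_of_nonneg hj0
      have : C x * T n = (C x * T (-1)) * (T 2) ^ (j.toNat + 1) := by
        rw [T_pow, mul_assoc, ← T_add]
        congr 1
        congr 1
        push_cast
        omega
      rw [this]
      exact mul_mem (gen_CT θ hx) (pow_mem (gen_T2 θ) _)

lemma mem_of_coeff (hθ : ∀ x, θ (θ x) = x) {f : LaurentPolynomial A}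
    (h1 : ∀ n : ℤ, θ (f.coeff n) = sgn n (f.coeff n))
    (h2 : ∀ n : ℤ, n < 0 → f.coeff n ∈ (Ideal.span {y : A | θ y = -y}) ^ (-n).toNat) :
    f ∈ contraction k A θ := by
  have hrep : f = f.coeff.sum fun n a => AddMonoidAlgebra.single n a := by
    apply AddMonoidAlgebra.coeff_injective
    rw [AddMonoidAlgebra.coeff_finsuppSum]
    simp only [AddMonoidAlgebra.coeff_single]
    exact (Finsupp.sum_single f.coeff).symm
  rw [hrep, Finsupp.sum]
  refine sum_mem fun i _ => ?_
  rw [single_eq_C_mul_T]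
  exact monomial_mem θ hθ (h1 i) (h2 i)

end CSec

section MSec

variable {k A : Type*} [CommRing k] [CommRing A] [Algebra k A] [Invertible (2 : k)]
variable (θ : A →ₐ[k] A)

/-- projection to the `(-1)^n`-eigenspace -/
noncomputable def pPart (n : ℤ) (x : A) : A := ⅟(2:k) • (x + sgn n (θ x))

/-- projection to the `(-1)^{n+1}`-eigenspace -/
noncomputable def qPart (n : ℤ) (x : A) : A := ⅟(2:k) • (x - sgn n (θ x))

lemma pPart_zero (n : ℤ) : pPart θ n 0 = 0 := by
  unfold pPart
  rw [map_zero, sgn_zero, add_zero, smul_zero]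

lemma qPart_zero (n : ℤ) : qPart θ n 0 = 0 := by
  unfold qPart
  rw [map_zero, sgn_zero, sub_zero, smul_zero]

lemma pPart_add_qPart (n : ℤ) (x : A) : pPart θ n x + qPart θ n x = x := by
  unfold pPart qPart
  rw [← smul_add, show (x + sgn n (θ x)) + (x - sgn n (θ x)) = x + x by ring, ← two_smul k,
    smul_smul, invOf_mul_self, one_smul]

lemma theta_pPart (hθ : ∀ x, θ (θ x) = x) (n : ℤ) (x : A) :
    θ (pPart θ n x) = sgn n (pPart θ n x) := by
  unfold pPart
  rw [map_smul, map_add, theta_sgn, hθ, sgn_smul, sgn_add, sgn_sgn, add_comm]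

lemma theta_qPart (hθ : ∀ x, θ (θ x) = x) (n : ℤ) (x : A) :
    θ (qPart θ n x) = - sgn n (qPart θ n x) := by
  unfold qPart
  rw [map_smul, map_sub, theta_sgn, hθ, sgn_smul, sgn_sub, sgn_sgn, ← smul_neg]
  congr 1
  ring

lemma sgn_mem_pow (hθ : ∀ x, θ (θ x) = x) {r : ℕ} {x : A} (n : ℤ)
    (hx : x ∈ (Ideal.span {y : A | θ y = -y}) ^ r) :
    sgn n x ∈ (Ideal.span {y : A | θ y = -y}) ^ r := by
  unfold sgn
  split
  · exact hx
  · exact neg_mem hx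

lemma pPart_mem_pow (hθ : ∀ x, θ (θ x) = x) {r : ℕ} {x : A} (n : ℤ)
    (hx : x ∈ (Ideal.span {y : A | θ y = -y}) ^ r) :
    pPart θ n x ∈ (Ideal.span {y : A | θ y = -y}) ^ r := by
  unfold pPart
  rw [Algebra.smul_def]
  exact Ideal.mul_mem_left _ _ (add_mem hx (sgn_mem_pow θ hθ n (theta_mem_pow θ hθ hx)))

lemma qPart_mem_pow (hθ : ∀ x, θ (θ x) = x) {r : ℕ} {x : A} (n : ℤ)
    (hx : x ∈ (Ideal.span {y : A | θ y = -y}) ^ r) :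
    qPart θ n x ∈ (Ideal.span {y : A | θ y = -y}) ^ r := by
  unfold qPart
  rw [Algebra.smul_def]
  exact Ideal.mul_mem_left _ _ (sub_mem hx (sgn_mem_pow θ hθ n (theta_mem_pow θ hθ hx)))

lemma T_one_mul_apply (w : LaurentPolynomial A) (n : ℤ) :
    ((T 1 * w : LaurentPolynomial A)).coeff n = w.coeff (n - 1) := by
  show ((AddMonoidAlgebra.single (1:ℤ) (1:A)) * (w : AddMonoidAlgebra A ℤ)).coeff n = (w : AddMonoidAlgebra A ℤ).coeff (n - 1)
  rw [AddMonoidAlgebra.coeff_single_mul_apply, one_mul]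
  congr 1
  ring

end MSec

/-!
STATEMENT 15: `𝐀 ⊗_{k[t]} k[√t]` is canonically isomorphic, as a
`k[√t]`-algebra, to the extended Rees algebra
`A[√t] ⊕ ⊕_{n≥1} Iⁿ·(√t)⁻ⁿ ⊆ A[√t^{±1}]` of `(A, I)`, where `I` is the ideal
generated by `A^{-θ}`.  Since `k[√t]` is free over `k[t]` with basis
`{1, √t}`, this says exactly: an element `f ∈ A[√t^{±1}]` lies in the
extended Rees algebra (i.e. its coefficient in each degree `n < 0` lies in
`I^{-n}`) if and only if `f` is uniquely of the form `g + √t·h` with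
`g, h ∈ 𝐀`. -/
theorem contraction_baseChange_sqrt_eq_extendedRees
    (k A : Type*) [CommRing k] [CommRing A] [Algebra k A] [Invertible (2 : k)]
    (θ : A →ₐ[k] A) (hθ : θ.comp θ = AlgHom.id k A) :
    ∀ f : LaurentPolynomial A,
      (∀ n : ℤ, n < 0 → AddMonoidAlgebra.coeff f n ∈ (Ideal.span {x : A | θ x = -x}) ^ (-n).toNat) ↔
      ∃! p : ↥(contraction k A θ) × ↥(contraction k A θ),
        f = (p.1 : LaurentPolynomial A) + T 1 * (p.2 : LaurentPolynomial A) := by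
  have hθ' : ∀ x, θ (θ x) = x := fun x => by simpa using AlgHom.congr_fun hθ x
  have addT : ∀ (u v : LaurentPolynomial A) (n : ℤ),
      (u + T 1 * v : LaurentPolynomial A).coeff n = u.coeff n + v.coeff (n - 1) := by
    intro u v n
    rw [AddMonoidAlgebra.coeff_add, Finsupp.add_apply, T_one_mul_apply]
  intro f
  constructor
  · intro hf
    set g : LaurentPolynomial A := AddMonoidAlgebra.ofCoeff <| Finsupp.onFinset f.coeff.support (fun n => pPart θ n (f.coeff n))
      (fun n hn => Finsupp.mem_support_iff.mpr
        (fun h0 => hn (by show pPart θ n (f.coeff n) = 0; rw [h0, pPart_zero]))) with hgdef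
    set h : LaurentPolynomial A := AddMonoidAlgebra.ofCoeff <| Finsupp.onFinset (f.coeff.support.image (· - 1))
      (fun n => qPart θ (n+1) (f.coeff (n+1)))
      (fun n hn => Finset.mem_image.mpr ⟨n+1, Finsupp.mem_support_iff.mpr
        (fun h0 => hn (by show qPart θ (n+1) (f.coeff (n+1)) = 0; rw [h0, qPart_zero])), by ring⟩) with hhdef
    have hga : ∀ n, g.coeff n = pPart θ n (f.coeff n) := fun n => rfl
    have hha : ∀ n, h.coeff n = qPart θ (n+1) (f.coeff (n+1)) := fun n => rfl
    have hg : g ∈ contraction k A θ := by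
      refine mem_of_coeff θ hθ' (fun n => ?_) (fun n hn => ?_)
      · rw [hga]
        exact theta_pPart θ hθ' n (f.coeff n)
      · rw [hga]
        exact pPart_mem_pow θ hθ' n (hf n hn)
    have hh : h ∈ contraction k A θ := by
      refine mem_of_coeff θ hθ' (fun n => ?_) (fun n hn => ?_)
      · rw [hha, theta_qPart θ hθ', sgn_succ, neg_neg]
      · rw [hha]
        rcases eq_or_lt_of_le (show n ≤ -1 by omega) with he | hlt
        · subst he
          rw [show ((-(-1:ℤ)).toNat) = 1 from rfl, pow_one, show (-1:ℤ)+1 = 0 by ring]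
          exact Ideal.subset_span (show θ (qPart θ 0 (f.coeff 0)) = -(qPart θ 0 (f.coeff 0)) by
            rw [theta_qPart θ hθ', sgn_of_even (by decide)])
        · have hn1 : n + 1 < 0 := by omega
          set r' := (-(n+1)).toNat with hr'def
          have hr' : (r' : ℤ) = -(n+1) := Int.toNat_of_nonneg (by omega)
          have hzmem : qPart θ (n+1) (f.coeff (n+1)) ∈ (Ideal.span {y : A | θ y = -y}) ^ r' :=
            qPart_mem_pow θ hθ' (n+1) (hf (n+1) hn1)
          have heig : θ (qPart θ (n+1) (f.coeff (n+1))) =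
              - sgn (r':ℤ) (qPart θ (n+1) (f.coeff (n+1))) := by
            rw [theta_qPart θ hθ']
            congr 1
            refine sgn_congr ?_ _
            rw [hr']
            exact even_neg.symm
          have hq := mem_Qset_succ_of θ hθ' hzmem heig
          have hmem := hq.2.1
          rwa [show (-n).toNat = r' + 1 by omega]
    refine ⟨⟨⟨g, hg⟩, ⟨h, hh⟩⟩, ?_, ?_⟩
    · show f = g + T 1 * h
      ext n
      rw [addT, hga, hha, show n - 1 + 1 = n by ring]
      exact (pPart_add_qPart θ n (f.coeff n)).symm
    · rintro ⟨⟨g', hg'⟩, ⟨h', hh'⟩⟩ heq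
      have heq' : ∀ n, f.coeff n = g'.coeff n + h'.coeff (n-1) := by
        intro n
        have c1 := congrArg (fun w : LaurentPolynomial A => w.coeff n) heq
        dsimp only at c1
        rwa [addT] at c1
      have key : ∀ n : ℤ, g'.coeff n = g.coeff n ∧ h'.coeff (n-1) = h.coeff (n-1) := by
        intro n
        have e1 : g'.coeff n + h'.coeff (n-1) = g.coeff n + h.coeff (n-1) := by
          rw [← heq' n, hga, hha, show n - 1 + 1 = n by ring]
          exact (pPart_add_qPart θ n (f.coeff n)).symm
        set u := g'.coeff n - g.coeff n with hudef
        have hu2 : h.coeff (n-1) - h'.coeff (n-1) = u := by rw [hudef]; linear_combination -e1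
        have ha1 : θ u = sgn n u := by
          rw [hudef, map_sub, (coeff_mem θ hg' n).1, (coeff_mem θ hg n).1, sgn_sub]
        have ha2 : θ u = - sgn n u := by
          rw [← hu2, map_sub, (coeff_mem θ hh (n-1)).1, (coeff_mem θ hh' (n-1)).1, ← sgn_sub]
          have hs := sgn_succ (n-1) (h.coeff (n-1) - h'.coeff (n-1))
          rw [show (n-1)+1 = n by ring] at hs
          linear_combination hs
        have hu0 : u = 0 := eigen_cancel k ha1 ha2
        refine ⟨sub_eq_zero.mp hu0, ?_⟩
        have := sub_eq_zero.mp (hu2.trans hu0)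
        exact this.symm
      have e1 : g' = g := by
        ext n
        exact (key n).1
      have e2 : h' = h := by
        ext m
        have := (key (m+1)).2
        rwa [show m+1-1 = m by ring] at this
      simp only [Prod.mk.injEq, Subtype.mk.injEq]
      exact ⟨e1, e2⟩
  · rintro ⟨⟨⟨g, hg⟩, ⟨h, hh⟩⟩, heq, -⟩
    intro n hn
    have hfn : f.coeff n = g.coeff n + h.coeff (n - 1) := by
      have c := congrArg (fun w : LaurentPolynomial A => w.coeff n) heq
      dsimp only at c
      rwa [addT] at c
    have h1 := (coeff_mem θ hg n).2
    have h2 := (coeff_mem θ hh (n-1)).2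
    have h2' : h.coeff (n-1) ∈ (Ideal.span {x : A | θ x = -x}) ^ (-n).toNat :=
      Ideal.pow_le_pow_right (by omega) h2
    rw [hfn]
    exact add_mem h1 h2'
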